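/- Let a(x) = (1 - (3 - e)x)^2. Then for all x ∈ [0,1), a'(x)/a(x) + 4/(1 - x) - 2(1 - exp(x - 1))/(exp(x - 1) - x) ≤ 0. -/

import Mathlib

open Real Set

private lemma monoIcc (f f' : ℝ → ℝ) (hf : ∀ t, HasDerivAt f (f' t) t) {a b : ℝ}
    (h : ∀ t ∈ Set.Icc a b, 0 ≤ f' t) : MonotoneOn f (Set.Icc a b) := by
  apply monotoneOn_of_deriv_nonneg (convex_Icc a b)
  · exact fun t _ => (hf t).continuousAt.continuousWithinAt
  · exact fun t _ => (hf t).differentiableAt.differentiableWithinAt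
  · intro t ht
    rw [(hf t).deriv]
    exact h t (interior_subset ht)

private lemma antiIcc (f f' : ℝ → ℝ) (hf : ∀ t, HasDerivAt f (f' t) t) {a b : ℝ}
    (h : ∀ t ∈ Set.Icc a b, f' t ≤ 0) : AntitoneOn f (Set.Icc a b) := by
  apply antitoneOn_of_deriv_nonpos (convex_Icc a b)
  · exact fun t _ => (hf t).continuousAt.continuousWithinAt
  · exact fun t _ => (hf t).differentiableAt.differentiableWithinAt
  · intro t ht
    rw [(hf t).deriv]
    exact h t (interior_subset ht)

private lemma pattern (g : ℝ → ℝ) (hc : ContinuousOn g (Set.Icc 0 1)) {s' : ℝ}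
    (h0 : (0:ℝ) ≤ s') (h1 : s' ≤ 1)
    (hm : MonotoneOn g (Set.Icc 0 s')) (hA : AntitoneOn g (Set.Icc s' 1))
    (hg0 : 0 ≤ g 0) (hg1 : g 1 ≤ 0) :
    ∃ s, 0 ≤ s ∧ s ≤ 1 ∧ (∀ t ∈ Set.Icc 0 s, 0 ≤ g t) ∧ (∀ t ∈ Set.Icc s 1, g t ≤ 0) := by
  have hgs' : 0 ≤ g s' :=
    le_trans hg0 (hm ⟨le_refl 0, h0⟩ ⟨h0, le_refl s'⟩ h0)
  have hIVT := intermediate_value_Icc' h1 (hc.mono (Set.Icc_subset_Icc h0 (le_refl 1)))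
  obtain ⟨s, hs, hgs⟩ := hIVT (⟨hg1, hgs'⟩ : (0:ℝ) ∈ Set.Icc (g 1) (g s'))
  refine ⟨s, le_trans h0 hs.1, hs.2, ?_, ?_⟩
  · intro t ht
    by_cases htc : t ≤ s'
    · exact le_trans hg0 (hm ⟨le_refl 0, h0⟩ ⟨ht.1, htc⟩ ht.1)
    · have h2 : g s ≤ g t := hA ⟨le_of_not_ge htc, le_trans ht.2 hs.2⟩ hs ht.2
      rw [hgs] at h2; exact h2
  · intro t ht
    have h2 : g t ≤ g s := hA hs ⟨le_trans hs.1 ht.1, ht.2⟩ ht.1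
    rw [hgs] at h2; exact h2

private lemma key : ∀ t ∈ Set.Icc (0:ℝ) 1,
    0 ≤ Real.exp t * ((2*Real.exp 1 - 4) - (2*Real.exp 1 - 5)*t)
        - (2*Real.exp 1 - 4) - t - (3 - Real.exp 1)*t^2 := by
  have he1 : (2.7182818283 : ℝ) < Real.exp 1 := Real.exp_one_gt_d9
  have he2 : Real.exp 1 < 2.7182818286 := Real.exp_one_lt_d9
  set e := Real.exp 1 with he
  set H : ℝ → ℝ := fun t => Real.exp t * ((2*e - 4) - (2*e - 5)*t)
      - ((2*e - 4) + t + (3 - e)*t^2) with hH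
  set H1 : ℝ → ℝ := fun t => Real.exp t * (1 - (2*e - 5)*t) - (1 + 2*(3 - e)*t) with hH1
  set H2 : ℝ → ℝ := fun t => Real.exp t * ((6 - 2*e) - (2*e - 5)*t) - 2*(3 - e) with hH2
  set H3 : ℝ → ℝ := fun t => Real.exp t * ((11 - 4*e) - (2*e - 5)*t) with hH3
  have hp : ∀ (u v t : ℝ), HasDerivAt (fun s : ℝ => u - v*s) (-v) t := by
    intro u v t
    simpa using ((hasDerivAt_id t).const_mul v).const_sub u
  have hq : ∀ t : ℝ, HasDerivAt (fun s : ℝ => (2*e - 4) + s + (3 - e)*s^2)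
      (1 + (3 - e)*(2*t)) t := by
    intro t
    have h := (((hasDerivAt_id t).const_add (2*e-4)).add ((hasDerivAt_pow 2 t).const_mul (3-e)))
    refine h.congr_deriv ?_
    simp
  have dH : ∀ t, HasDerivAt H (H1 t) t := by
    intro t
    have h := ((Real.hasDerivAt_exp t).mul (hp (2*e-4) (2*e-5) t)).sub (hq t)
    refine h.congr_deriv ?_
    simp only [hH1]; ring
  have dH1 : ∀ t, HasDerivAt H1 (H2 t) t := by
    intro t
    have hq1 : HasDerivAt (fun s : ℝ => 1 + 2*(3 - e)*s) (2*(3 - e)) t := by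
      simpa using ((hasDerivAt_id t).const_mul (2*(3-e))).const_add 1
    have h := ((Real.hasDerivAt_exp t).mul (hp 1 (2*e-5) t)).sub hq1
    refine h.congr_deriv ?_
    simp only [hH2]; ring
  have dH2 : ∀ t, HasDerivAt H2 (H3 t) t := by
    intro t
    have h := ((Real.hasDerivAt_exp t).mul (hp (6-2*e) (2*e-5) t)).sub_const (2*(3-e))
    refine h.congr_deriv ?_
    simp only [hH3]; ring
  have hB : (0:ℝ) < 2*e - 5 := by linarith
  have h11 : (0:ℝ) < 11 - 4*e := by linarith
  set s0 : ℝ := (11 - 4*e) / (2*e - 5) with hs0def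
  have hs0a : (0:ℝ) ≤ s0 := le_of_lt (div_pos h11 hB)
  have hs0b : s0 ≤ 1 := by
    rw [hs0def, div_le_one hB]; linarith
  -- H2 shape
  have hm2 : MonotoneOn H2 (Set.Icc 0 s0) := by
    apply monoIcc H2 H3 dH2
    intro t ht
    have : t * (2*e - 5) ≤ 11 - 4*e := (le_div_iff₀ hB).mp ht.2
    have := Real.exp_pos t
    rw [hH3]
    have hnn : 0 ≤ (11 - 4*e) - (2*e - 5)*t := by linarith
    positivity
  have ha2 : AntitoneOn H2 (Set.Icc s0 1) := by
    apply antiIcc H2 H3 dH2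
    intro t ht
    have : 11 - 4*e ≤ t * (2*e - 5) := (div_le_iff₀ hB).mp ht.1
    rw [hH3]
    have hnp : (11 - 4*e) - (2*e - 5)*t ≤ 0 := by linarith
    exact mul_nonpos_of_nonneg_of_nonpos (Real.exp_pos t).le hnp
  have hH2_0 : 0 ≤ H2 0 := by simp [hH2]; linarith
  have hH2_1 : H2 1 ≤ 0 := by
    simp only [hH2]
    rw [← he]
    nlinarith [sq_nonneg (e - 2.7182818283)]
  obtain ⟨s2, hs2a, hs2b, hs2p, hs2n⟩ := pattern H2
    (fun t _ => (dH2 t).continuousAt.continuousWithinAt) hs0a hs0b hm2 ha2 hH2_0 hH2_1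
  -- H1 shape
  have hm1 : MonotoneOn H1 (Set.Icc 0 s2) :=
    monoIcc H1 H2 dH1 (fun t ht => hs2p t ht)
  have ha1 : AntitoneOn H1 (Set.Icc s2 1) :=
    antiIcc H1 H2 dH1 (fun t ht => hs2n t ht)
  have hH1_0 : 0 ≤ H1 0 := by simp [hH1]
  have hH1_1 : H1 1 ≤ 0 := by
    simp only [hH1]
    rw [← he]
    nlinarith [sq_nonneg (e - 2.7182818283)]
  obtain ⟨s1, hs1a, hs1b, hs1p, hs1n⟩ := pattern H1
    (fun t _ => (dH1 t).continuousAt.continuousWithinAt) hs2a hs2b hm1 ha1 hH1_0 hH1_1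
  -- H shape
  have hm : MonotoneOn H (Set.Icc 0 s1) :=
    monoIcc H H1 dH (fun t ht => hs1p t ht)
  have hA : AntitoneOn H (Set.Icc s1 1) :=
    antiIcc H H1 dH (fun t ht => hs1n t ht)
  have hH_0 : H 0 = 0 := by simp [hH]
  have hH_1 : H 1 = 0 := by simp only [hH]; rw [← he]; ring
  intro t ht
  have goal : 0 ≤ H t := by
    by_cases htc : t ≤ s1
    · have := hm ⟨le_refl 0, hs1a⟩ ⟨ht.1, htc⟩ ht.1
      rw [hH_0] at this; exact this
    · have := hA ⟨le_of_not_ge htc, le_trans ht.2 le_rfl⟩ ⟨hs1b, le_refl 1⟩ ht.2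
      rw [hH_1] at this; exact this
  simp only [hH] at goal
  linarith [goal]

theorem stmt_6 (a : ℝ → ℝ)
    (ha : ∀ x, a x = (1 - (3 - Real.exp 1) * x)^2) :
    ∀ x ∈ Set.Ico (0:ℝ) 1,
      deriv a x / a x + 4 / (1 - x)
        - 2 * (1 - Real.exp (x - 1)) / (Real.exp (x - 1) - x) ≤ 0 := by
  have he1 : (2.7182818283 : ℝ) < Real.exp 1 := Real.exp_one_gt_d9
  have he2 : Real.exp 1 < 2.7182818286 := Real.exp_one_lt_d9
  intro x hx
  obtain ⟨hx0, hx1⟩ := hx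
  set e := Real.exp 1 with he
  set E := Real.exp (x - 1) with hE
  have hEpos : 0 < E := Real.exp_pos _
  have hd1 : 0 < 1 - (3 - e) * x := by nlinarith
  have hd2 : 0 < 1 - x := by linarith
  have hd3 : 0 < E - x := by
    have h := Real.add_one_lt_exp (x := x - 1) (by intro h; apply absurd h; intro h'; linarith)
    rw [hE]; linarith
  -- compute deriv a
  have haf : a = fun x => (1 - (3 - e) * x)^2 := funext ha
  have hda : deriv a x = 2 * (1 - (3 - e) * x) * (-(3 - e)) := by
    rw [haf]
    have h : HasDerivAt (fun x : ℝ => (1 - (3 - e) * x)^2)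
        (2 * (1 - (3 - e) * x) * (-(3 - e))) x := by
      have h1 : HasDerivAt (fun x : ℝ => 1 - (3 - e) * x) (-(3 - e)) x := by
        simpa using ((hasDerivAt_id x).const_mul (3 - e)).const_sub 1
      have := h1.pow 2
      refine this.congr_deriv ?_
      ring
    exact h.deriv
  -- key inequality at t = 1 - x
  have hkey := key (1 - x) ⟨by linarith, by linarith⟩
  rw [← he] at hkey
  -- multiply by E
  have hEe : E * Real.exp (1 - x) = 1 := by
    rw [hE, ← Real.exp_add]; norm_num
  have hEH : 0 ≤ ((2*e - 4) - (2*e - 5)*(1 - x)) - E * ((2*e - 4) + (1 - x) + (3 - e)*(1 - x)^2) := by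
    have hmul := mul_nonneg hEpos.le hkey
    have hid : E * (Real.exp (1 - x) * ((2*e - 4) - (2*e - 5)*(1 - x))
          - (2*e - 4) - (1 - x) - (3 - e)*(1 - x)^2)
        = ((2*e - 4) - (2*e - 5)*(1 - x)) * (E * Real.exp (1 - x))
          - E * ((2*e - 4) + (1 - x) + (3 - e)*(1 - x)^2) := by ring
    rw [hid, hEe, mul_one] at hmul
    linarith
  -- combine fractions
  have heq : deriv a x / a x + 4 / (1 - x) - 2 * (1 - E) / (E - x)
      = (-2*(3 - e)*(1 - x)*(E - x) + 4*(1 - (3 - e)*x)*(E - x)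
          - 2*(1 - E)*(1 - (3 - e)*x)*(1 - x))
        / ((1 - (3 - e)*x) * ((1 - x) * (E - x))) := by
    rw [hda, ha x]
    field_simp
  rw [heq]
  apply div_nonpos_of_nonpos_of_nonneg
  · nlinarith [hEH]
  · positivity
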